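/- There exists a constant c > 0 such that for every 𝔟 ∈ {−1, 0, 1}, every N ≥ 2, every s ∈ ℝ, every t with 0 < t ≤ c N^{−4}, and every ξ ∈ [−1, 1], the second Kawahara Picard iterate with datum w := w_{N,s} satisfies |g_2[w](t)(ξ)| ≥ (t/2) · |ξ| · (log N)^{−2} · N^{−2s}. -/

import Mathlib

open MeasureTheory Filter
open scoped ENNReal NNReal Topology

noncomputable section

/-- Convolution of two functions on `ℝ` with respect to Lebesgue measure. -/
def convR (f g : ℝ → ℂ) : ℝ → ℂ := fun x => ∫ y, f y * g (x - y)

/-- The `L¹` norm `∫ |f|`. -/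
def L1R (f : ℝ → ℂ) : ℝ≥0∞ := ∫⁻ x, (‖f x‖₊ : ℝ≥0∞)

/-- The `L²` norm `(∫ |f|²)^{1/2}`. -/
def L2R (f : ℝ → ℂ) : ℝ≥0∞ := (∫⁻ x, (‖f x‖₊ : ℝ≥0∞) ^ 2) ^ ((1 : ℝ) / 2)

/-- The `H^s` Sobolev norm read on the Fourier side. -/
def HsR (s : ℝ) (f : ℝ → ℂ) : ℝ≥0∞ :=
  (∫⁻ ξ : ℝ, ENNReal.ofReal ((1 + ξ ^ 2) ^ s) * (‖f ξ‖₊ : ℝ≥0∞) ^ 2) ^ ((1 : ℝ) / 2)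

/-- The datum `w_{N,s} = (log N)⁻¹ N^{−s} 1_{[N−1,N+1] ∪ [−N−1,−N+1]}`. -/
def wNs (N s : ℝ) : ℝ → ℂ := fun ξ =>
  (((Real.log N)⁻¹ * N ^ (-s) : ℝ) : ℂ) *
    (Set.Icc (N - 1) (N + 1) ∪ Set.Icc (-N - 1) (-N + 1)).indicator
      (fun _ => (1 : ℂ)) ξ

/-- The property that `g : ℕ → ℝ → (ℝ → ℂ)` is the family of Fourier-side Picard
iterates for the Kawahara equation `∂ₜu − ∂ₓ⁵u + 𝔟∂ₓ³u + ∂ₓ(u²) = 0` with Fourier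
datum `w`: `g 1 t ξ = e^{it(ξ⁵+𝔟ξ³)} w(ξ)` and, for `n ≥ 2`,
`g n t ξ = −iξ Σ_{n₁+n₂=n, n₁,n₂≥1} ∫₀ᵗ e^{i(t−t')(ξ⁵+𝔟ξ³)} (g n₁ t' ∗ g n₂ t')(ξ) dt'`. -/
def KawPicard (b : ℝ) (w : ℝ → ℂ) (g : ℕ → ℝ → ℝ → ℂ) : Prop :=
  (∀ t ξ : ℝ, g 1 t ξ = Complex.exp (Complex.I * t * (ξ ^ 5 + b * ξ ^ 3)) * w ξ) ∧
  (∀ n, 2 ≤ n → ∀ t ξ : ℝ, g n t ξ =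
    -Complex.I * ξ * ∑ k ∈ Finset.Ioo 0 n,
      ∫ t' in (0:ℝ)..t, Complex.exp (Complex.I * (t - t') * (ξ ^ 5 + b * ξ ^ 3)) *
        convR (g k t') (g (n - k) t') ξ)

/-- Lower bound on the second Kawahara Picard iterate with datum
`w_{N,s}`: there is `c > 0` such that for `0 < t ≤ c N⁻⁴` and `ξ ∈ [−1,1]`,
`|g₂(t)(ξ)| ≥ (t/2) |ξ| (log N)⁻² N^{−2s}`. -/
private lemma abs_add_five (a b c d e : ℝ) : |a+b+c+d+e| ≤ |a|+|b|+|c|+|d|+|e| := by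
  have h1 := abs_add_le (a+b+c+d) e
  have h2 := abs_add_le (a+b+c) d
  have h3 := abs_add_le (a+b) c
  have h4 := abs_add_le a b
  linarith

private lemma pow5_diff_le {x y M : ℝ} (hx : |x| ≤ M) (hy : |y| ≤ M) :
    |x ^ 5 - y ^ 5| ≤ 5 * M ^ 4 * |x - y| := by
  have hM : 0 ≤ M := (abs_nonneg x).trans hx
  have hx' := abs_nonneg x
  have hy' := abs_nonneg y
  have key : |x ^ 4 + x ^ 3 * y + x ^ 2 * y ^ 2 + x * y ^ 3 + y ^ 4| ≤ 5 * M ^ 4 := by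
    have h1 : |x ^ 4| ≤ M ^ 4 := by
      rw [abs_pow]; exact pow_le_pow_left₀ hx' hx 4
    have h2 : |x ^ 3 * y| ≤ M ^ 4 := by
      rw [abs_mul, abs_pow]
      calc |x| ^ 3 * |y| ≤ M ^ 3 * M :=
            mul_le_mul (pow_le_pow_left₀ hx' hx 3) hy hy' (pow_nonneg hM 3)
        _ = M ^ 4 := by ring
    have h3 : |x ^ 2 * y ^ 2| ≤ M ^ 4 := by
      rw [abs_mul, abs_pow, abs_pow]
      calc |x| ^ 2 * |y| ^ 2 ≤ M ^ 2 * M ^ 2 :=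
            mul_le_mul (pow_le_pow_left₀ hx' hx 2) (pow_le_pow_left₀ hy' hy 2)
              (pow_nonneg hy' 2) (pow_nonneg hM 2)
        _ = M ^ 4 := by ring
    have h4 : |x * y ^ 3| ≤ M ^ 4 := by
      rw [abs_mul, abs_pow]
      calc |x| * |y| ^ 3 ≤ M * M ^ 3 :=
            mul_le_mul hx (pow_le_pow_left₀ hy' hy 3) (pow_nonneg hy' 3) hM
        _ = M ^ 4 := by ring
    have h5 : |y ^ 4| ≤ M ^ 4 := by
      rw [abs_pow]; exact pow_le_pow_left₀ hy' hy 4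
    calc |x ^ 4 + x ^ 3 * y + x ^ 2 * y ^ 2 + x * y ^ 3 + y ^ 4|
        ≤ |x ^ 4| + |x ^ 3 * y| + |x ^ 2 * y ^ 2| + |x * y ^ 3| + |y ^ 4| :=
          abs_add_five _ _ _ _ _
      _ ≤ 5 * M ^ 4 := by linarith
  calc |x ^ 5 - y ^ 5|
      = |(x - y) * (x ^ 4 + x ^ 3 * y + x ^ 2 * y ^ 2 + x * y ^ 3 + y ^ 4)| := by
        congr 1; ring
    _ = |x - y| * |x ^ 4 + x ^ 3 * y + x ^ 2 * y ^ 2 + x * y ^ 3 + y ^ 4| := abs_mul _ _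
    _ ≤ |x - y| * (5 * M ^ 4) := mul_le_mul_of_nonneg_left key (abs_nonneg _)
    _ = 5 * M ^ 4 * |x - y| := by ring

private lemma pow3_diff_le {x y M : ℝ} (hx : |x| ≤ M) (hy : |y| ≤ M) :
    |x ^ 3 - y ^ 3| ≤ 3 * M ^ 2 * |x - y| := by
  have hM : 0 ≤ M := (abs_nonneg x).trans hx
  have hx' := abs_nonneg x
  have hy' := abs_nonneg y
  have key : |x ^ 2 + x * y + y ^ 2| ≤ 3 * M ^ 2 := by
    have h1 : |x ^ 2| ≤ M ^ 2 := by
      rw [abs_pow]; exact pow_le_pow_left₀ hx' hx 2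
    have h2 : |x * y| ≤ M ^ 2 := by
      rw [abs_mul]
      calc |x| * |y| ≤ M * M := mul_le_mul hx hy hy' hM
        _ = M ^ 2 := by ring
    have h3 : |y ^ 2| ≤ M ^ 2 := by
      rw [abs_pow]; exact pow_le_pow_left₀ hy' hy 2
    have h4 := abs_add_le (x ^ 2 + x * y) (y ^ 2)
    have h5 := abs_add_le (x ^ 2) (x * y)
    linarith
  calc |x ^ 3 - y ^ 3|
      = |(x - y) * (x ^ 2 + x * y + y ^ 2)| := by congr 1; ring
    _ = |x - y| * |x ^ 2 + x * y + y ^ 2| := abs_mul _ _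
    _ ≤ |x - y| * (3 * M ^ 2) := mul_le_mul_of_nonneg_left key (abs_nonneg _)
    _ = 3 * M ^ 2 * |x - y| := by ring

private lemma exp_combine {α : ℝ} {z1 z2 z3 z4 z5 : ℂ} (h : z1 + z2 + z3 = z4 + z5) :
    Complex.exp z1 * (Complex.exp z2 * (α : ℂ) * (Complex.exp z3 * (α : ℂ)))
      = Complex.exp z4 * (((α ^ 2 : ℝ) : ℂ) * Complex.exp z5) := by
  have h2 : Complex.exp z1 * Complex.exp z2 * Complex.exp z3
      = Complex.exp z4 * Complex.exp z5 := by
    rw [← Complex.exp_add, ← Complex.exp_add, ← Complex.exp_add, h, Complex.exp_add]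
  calc Complex.exp z1 * (Complex.exp z2 * (α : ℂ) * (Complex.exp z3 * (α : ℂ)))
      = Complex.exp z1 * Complex.exp z2 * Complex.exp z3 * ((α : ℂ) * (α : ℂ)) := by ring
    _ = Complex.exp z4 * Complex.exp z5 * ((α : ℂ) * (α : ℂ)) := by rw [h2]
    _ = Complex.exp z4 * (((α ^ 2 : ℝ) : ℂ) * Complex.exp z5) := by push_cast; ring

set_option maxHeartbeats 2000000 in
theorem statement15 :
    ∃ c : ℝ, 0 < c ∧
      ∀ b : ℝ, b = -1 ∨ b = 0 ∨ b = 1 →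
      ∀ N s : ℝ, 2 ≤ N →
      ∀ g : ℕ → ℝ → ℝ → ℂ, KawPicard b (wNs N s) g →
      ∀ t : ℝ, 0 < t → t ≤ c * N ^ (-(4 : ℝ)) →
      ∀ ξ : ℝ, ξ ∈ Set.Icc (-1 : ℝ) 1 →
        t / 2 * |ξ| * Real.log N ^ (-(2 : ℝ)) * N ^ (-(2 * s)) ≤
          ‖g 2 t ξ‖ := by
  refine ⟨1/100, by norm_num, ?_⟩
  intro b hb N s hN g hg t ht htc ξ hξmem
  obtain ⟨h1, h2⟩ := hg
  obtain ⟨hξ1, hξ2⟩ := hξmem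
  have hb1 : |b| ≤ 1 := by rcases hb with h|h|h <;> simp [h]
  have hN0 : (0:ℝ) < N := by linarith
  have hlog : 0 < Real.log N := Real.log_pos (by linarith)
  set α : ℝ := (Real.log N)⁻¹ * N ^ (-s) with hαdef
  have hα0 : 0 < α := mul_pos (inv_pos.2 hlog) (Real.rpow_pos_of_pos hN0 _)
  set A : Set ℝ := Set.Icc (N-1) (N+1) ∪ Set.Icc (-N-1) (-N+1) with hAdef
  have hAmeas : MeasurableSet A := measurableSet_Icc.union measurableSet_Icc
  set S : Set ℝ := A ∩ {η : ℝ | ξ - η ∈ A} with hSdef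
  have hSmeas : MeasurableSet S :=
    hAmeas.inter (hAmeas.preimage (measurable_const.sub measurable_id))
  have hSfin : volume S ≠ ⊤ := by
    have hle : volume S ≤ volume (Set.Icc (N-1) (N+1)) + volume (Set.Icc (-N-1) (-N+1)) :=
      le_trans (measure_mono (hAdef ▸ Set.inter_subset_left)) (measure_union_le _ _)
    exact (hle.trans_lt (ENNReal.add_lt_top.2 ⟨measure_Icc_lt_top, measure_Icc_lt_top⟩)).ne
  set Φ : ℝ → ℝ := fun η => (η^5 + b*η^3) + ((ξ-η)^5 + b*(ξ-η)^3) - (ξ^5 + b*ξ^3) with hΦdef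
  clear_value α
  clear_value Φ
  have hΦcont : Continuous Φ := by rw [hΦdef]; fun_prop
  set F : ℝ → ℝ → ℂ := fun t' η =>
    S.indicator (fun η' => ((α^2 : ℝ) : ℂ) * Complex.exp (((t' * Φ η' : ℝ)) * Complex.I)) η
    with hFdef
  -- values of wNs
  have hwval : ∀ x : ℝ, x ∈ A → wNs N s x = (α : ℂ) := by
    intro x hx
    rw [hαdef]
    simp only [wNs, ← hAdef, Set.indicator_of_mem hx, mul_one]
  have hwval0 : ∀ x : ℝ, x ∉ A → wNs N s x = 0 := by
    intro x hx
    simp only [wNs, ← hAdef, Set.indicator_of_notMem hx, mul_zero]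
  -- norm of F
  have hnormF : ∀ t' η : ℝ, ‖F t' η‖ = S.indicator (fun _ => α^2) η := by
    intro t' η
    by_cases hη : η ∈ S
    · simp only [hFdef, Set.indicator_of_mem hη]
      rw [norm_mul,
        Complex.norm_exp_ofReal_mul_I, Complex.norm_real, Real.norm_eq_abs, abs_of_nonneg (sq_nonneg α), mul_one]
    · simp only [hFdef, Set.indicator_of_notMem hη, norm_zero]
  have hFmeas : ∀ t' : ℝ, AEStronglyMeasurable (F t') volume := by
    intro t'
    apply AEStronglyMeasurable.indicator _ hSmeas
    apply Continuous.aestronglyMeasurable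
    exact continuous_const.mul (Complex.continuous_exp.comp
      ((Complex.continuous_ofReal.comp (continuous_const.mul hΦcont)).mul continuous_const))
  have hbound_int : Integrable (S.indicator fun _ => (α^2 : ℝ)) volume :=
    (integrable_indicator_iff hSmeas).2 (integrableOn_const hSfin)
  have hFint : ∀ t' : ℝ, Integrable (F t') volume := by
    intro t'
    refine hbound_int.mono' (hFmeas t') ?_
    filter_upwards with η
    rw [hnormF]
  -- the inner integral as a function of time
  set G : ℝ → ℂ := fun t' => ∫ η, F t' η with hGdef
  have hGcont : Continuous G := by
    rw [hGdef]
    apply continuous_of_dominated hFmeas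
      (fun t' => Filter.Eventually.of_forall fun η => (hnormF t' η).le) hbound_int
    filter_upwards with η
    by_cases hη : η ∈ S
    · simp only [hFdef, Set.indicator_of_mem hη]
      exact continuous_const.mul (Complex.continuous_exp.comp
      ((Complex.continuous_ofReal.comp ((continuous_id.mul continuous_const))).mul
        continuous_const))
    · simp only [hFdef, Set.indicator_of_notMem hη]
      exact continuous_const
  -- rewrite g 2
  have claim1 : ∀ t' : ℝ,
      Complex.exp (Complex.I * ((t:ℂ) - (t':ℂ)) * ((ξ:ℂ) ^ 5 + (b:ℂ) * (ξ:ℂ) ^ 3)) *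
          convR (g 1 t') (g 1 t') ξ
        = Complex.exp (Complex.I * (t:ℂ) * ((ξ:ℂ) ^ 5 + (b:ℂ) * (ξ:ℂ) ^ 3)) * G t' := by
    intro t'
    have hconv : convR (g 1 t') (g 1 t') ξ = ∫ η, g 1 t' η * g 1 t' (ξ - η) := rfl
    rw [hGdef, hconv, ← integral_const_mul, ← integral_const_mul]
    refine integral_congr_ae (Filter.Eventually.of_forall fun η => ?_)
    dsimp only
    rw [h1 t' η, h1 t' (ξ - η)]
    by_cases hη : η ∈ S
    · rw [hwval _ hη.1, hwval _ hη.2]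
      simp only [hFdef, Set.indicator_of_mem hη]
      apply exp_combine
      simp only [hΦdef]
      push_cast
      ring
    · simp only [hFdef, Set.indicator_of_notMem hη, mul_zero]
      by_cases hη1 : η ∈ A
      · have hη2 : ξ - η ∉ A := fun h => hη ⟨hη1, h⟩
        rw [hwval0 _ hη2]
        ring
      · rw [hwval0 _ hη1]
        ring
  have hg2 : g 2 t ξ = -Complex.I * (ξ:ℂ) *
      (Complex.exp (Complex.I * (t:ℂ) * ((ξ:ℂ) ^ 5 + (b:ℂ) * (ξ:ℂ) ^ 3)) *
        ∫ t' in (0:ℝ)..t, G t') := by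
    rw [h2 2 le_rfl t ξ, show Finset.Ioo 0 2 = {1} by decide, Finset.sum_singleton,
      show (2:ℕ) - 1 = 1 from rfl]
    rw [intervalIntegral.integral_congr (fun t'' _ => claim1 t''),
      intervalIntegral.integral_const_mul]
  set K : ℂ := ∫ t' in (0:ℝ)..t, G t' with hKdef
  have habs : ‖g 2 t ξ‖ = |ξ| * ‖K‖ := by
    rw [hg2, show Complex.I * (t:ℂ) * ((ξ:ℂ) ^ 5 + (b:ℂ) * (ξ:ℂ) ^ 3)
        = ((t * (ξ^5 + b*ξ^3) : ℝ) : ℂ) * Complex.I by push_cast; ring]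
    rw [show -Complex.I * (ξ:ℂ) *
        (Complex.exp (((t * (ξ^5 + b*ξ^3) : ℝ) : ℂ) * Complex.I) * K)
        = -(Complex.I * ((ξ:ℂ) *
          (Complex.exp (((t * (ξ^5 + b*ξ^3) : ℝ) : ℂ) * Complex.I) * K))) by ring]
    rw [norm_neg, norm_mul, norm_mul, norm_mul, Complex.norm_I,
      Complex.norm_exp_ofReal_mul_I, Complex.norm_real, Real.norm_eq_abs, one_mul, one_mul]
  -- the distinguished subinterval
  set L : ℝ := N - 1 + max ξ 0 with hLdef
  have hmax0 : 0 ≤ max ξ 0 := le_max_right _ _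
  have hmaxξ : ξ ≤ max ξ 0 := le_max_left _ _
  have hmax1 : max ξ 0 ≤ 1 := max_le hξ2 zero_le_one
  have hmax1' : max ξ 0 ≤ 1 + ξ := by
    rcases le_total ξ 0 with h|h
    · rw [max_eq_right h]; linarith
    · rw [max_eq_left h]; linarith
  have hIccS : Set.Icc L (L+1) ⊆ S := by
    intro x hx
    obtain ⟨hx1, hx2⟩ := hx
    constructor
    · rw [hAdef]
      left
      rw [Set.mem_Icc]
      constructor <;> [linarith; linarith]
    · show ξ - x ∈ A
      rw [hAdef]
      right
      rw [Set.mem_Icc]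
      constructor <;> [linarith; linarith]
  -- phase bound on S
  have hξa : |ξ| ≤ 1 := abs_le.2 ⟨hξ1, hξ2⟩
  have hΦbound : ∀ η ∈ S, |Φ η| ≤ 100 * N^4 := by
    intro η hη
    have hmem : ∀ x : ℝ, x ∈ A → |x| ≤ N + 1 := by
      intro x hx
      rw [hAdef] at hx
      rcases hx with h|h <;> (rw [Set.mem_Icc] at h; rw [abs_le]; constructor <;> linarith)
    have hη1 : |η| ≤ N + 1 := hmem _ hη.1
    have hη2 : |η - ξ| ≤ N + 1 := by
      rw [abs_sub_comm]; exact hmem _ hη.2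
    have q5 := pow5_diff_le hη1 hη2
    have q3 := pow3_diff_le hη1 hη2
    rw [show η - (η - ξ) = ξ by ring] at q5 q3
    have hrw : Φ η = (η^5 - (η-ξ)^5) + b*(η^3 - (η-ξ)^3) - ξ^5 - b*ξ^3 := by
      simp only [hΦdef]; ring
    rw [hrw]
    have htri : |(η^5 - (η-ξ)^5) + b*(η^3 - (η-ξ)^3) - ξ^5 - b*ξ^3|
        ≤ |η^5 - (η-ξ)^5| + |b*(η^3 - (η-ξ)^3)| + |ξ^5| + |b*ξ^3| := by
      have ha := abs_sub ((η^5 - (η-ξ)^5) + b*(η^3 - (η-ξ)^3) - ξ^5) (b*ξ^3)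
      have hb' := abs_sub ((η^5 - (η-ξ)^5) + b*(η^3 - (η-ξ)^3)) (ξ^5)
      have hc := abs_add_le (η^5 - (η-ξ)^5) (b*(η^3 - (η-ξ)^3))
      linarith
    have hb3 : |b*(η^3 - (η-ξ)^3)| ≤ 3*(N+1)^2*|ξ| := by
      rw [abs_mul]
      calc |b| * |η^3 - (η-ξ)^3| ≤ 1 * (3*(N+1)^2*|ξ|) :=
            mul_le_mul hb1 q3 (abs_nonneg _) zero_le_one
        _ = 3*(N+1)^2*|ξ| := one_mul _
    have hx5 : |ξ^5| ≤ 1 := by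
      rw [abs_pow]; exact pow_le_one₀ (abs_nonneg _) hξa
    have hx3 : |b*ξ^3| ≤ 1 := by
      rw [abs_mul, abs_pow]
      calc |b| * |ξ|^3 ≤ 1 * 1 :=
            mul_le_mul hb1 (pow_le_one₀ (abs_nonneg _) hξa) (pow_nonneg (abs_nonneg _) 3)
              zero_le_one
        _ = 1 := one_mul 1
    have hp4 : (0:ℝ) ≤ (N+1)^4 := by positivity
    have hp2 : (0:ℝ) ≤ (N+1)^2 := by positivity
    have h5le : 5*(N+1)^4*|ξ| ≤ 5*(N+1)^4 := by
      nlinarith [hξa, abs_nonneg ξ, hp4]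
    have h3le : 3*(N+1)^2*|ξ| ≤ 3*(N+1)^2 := by
      nlinarith [hξa, abs_nonneg ξ, hp2]
    have hN1 : N + 1 ≤ (3/2)*N := by linarith
    have hc4 : (N+1)^4 ≤ ((3/2)*N)^4 := pow_le_pow_left₀ (by linarith) hN1 4
    have hc2 : (N+1)^2 ≤ ((3/2)*N)^2 := pow_le_pow_left₀ (by linarith) hN1 2
    have hsq : 4 ≤ N^2 := by nlinarith
    have h24 : 4*N^2 ≤ N^4 := by
      nlinarith [mul_nonneg (sq_nonneg N) (by linarith : (0:ℝ) ≤ N^2 - 4)]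
    have h16 : 16 ≤ N^4 := by nlinarith [hsq, sq_nonneg (N^2-4)]
    have hpoly : 5*(N+1)^4 + 3*(N+1)^2 + 2 ≤ 100*N^4 := by nlinarith [hc4, hc2, h24, h16]
    linarith
  -- t * |Φ| ≤ 1
  have hNr : N ^ (-(4:ℝ)) = (N^4)⁻¹ := by
    rw [show (-(4:ℝ)) = -((4:ℕ):ℝ) by norm_num, Real.rpow_neg hN0.le, Real.rpow_natCast]
  have hN4 : (0:ℝ) < N^4 := by positivity
  have hsmall : ∀ t' ∈ Set.Ioc (0:ℝ) t, ∀ η ∈ S, |t' * Φ η| ≤ 1 := by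
    intro t' ht' η hη
    obtain ⟨ht'0, ht't⟩ := ht'
    rw [abs_mul, abs_of_pos ht'0]
    calc t' * |Φ η| ≤ t * (100 * N^4) := by
          apply mul_le_mul ht't (hΦbound η hη) (abs_nonneg _) ht.le
      _ ≤ (1/100 * (N^4)⁻¹) * (100 * N^4) := by
          apply mul_le_mul_of_nonneg_right _ (by positivity)
          rw [← hNr]; exact htc
      _ = 1 := by field_simp
  have hcos : ∀ t' ∈ Set.Ioc (0:ℝ) t, ∀ η ∈ S, 1/2 ≤ Real.cos (t' * Φ η) := by
    intro t' ht' η hη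
    have h := Real.one_sub_sq_div_two_le_cos (x := t' * Φ η)
    have h2' : (t' * Φ η)^2 ≤ 1 := by
      rw [← sq_abs]
      nlinarith [hsmall t' ht' η hη, abs_nonneg (t' * Φ η)]
    linarith only [h, h2']
  -- pointwise lower bound on re F
  have hpt : ∀ t' ∈ Set.Ioc (0:ℝ) t, ∀ η : ℝ,
      Set.indicator (Set.Icc L (L+1)) (fun _ => α^2/2) η ≤ (F t' η).re := by
    intro t' ht' η
    by_cases hη : η ∈ S
    · simp only [hFdef, Set.indicator_of_mem hη]
      have hre : (((α^2 : ℝ) : ℂ) * Complex.exp (((t' * Φ η : ℝ)) * Complex.I)).re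
          = α^2 * Real.cos (t' * Φ η) := by
        rw [Complex.mul_re, Complex.ofReal_re, Complex.ofReal_im,
          Complex.exp_ofReal_mul_I_re]
        simp
      rw [hre]
      have hind : Set.indicator (Set.Icc L (L+1)) (fun _ => α^2/2) η ≤ α^2/2 := by
        by_cases h : η ∈ Set.Icc L (L+1)
        · rw [Set.indicator_of_mem h]
        · rw [Set.indicator_of_notMem h]; positivity
      have := hcos t' ht' η hη
      nlinarith [sq_nonneg α]
    · rw [Set.indicator_of_notMem (fun h => hη (hIccS h))]
      simp only [hFdef, Set.indicator_of_notMem hη, Complex.zero_re, le_refl]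
  -- lower bound for the inner integral
  have hinner : ∀ t' ∈ Set.Ioc (0:ℝ) t, α^2/2 ≤ (G t').re := by
    intro t' ht'
    have hre : (G t').re = ∫ η, (F t' η).re := by
      have h := integral_re (hFint t')
      simp only [RCLike.re_to_complex] at h
      exact h.symm
    rw [hre]
    have hLint : Integrable (Set.indicator (Set.Icc L (L+1)) (fun _ => α^2/2)) volume :=
      (integrable_indicator_iff measurableSet_Icc).2
        (integrableOn_const measure_Icc_lt_top.ne)
    have hFre : Integrable (fun η => (F t' η).re) volume := by
      have h := (hFint t').re
      simpa only [RCLike.re_to_complex] using h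
    have hmono := integral_mono hLint hFre (hpt t' ht')
    have hval : ∫ η, Set.indicator (Set.Icc L (L+1)) (fun _ => α^2/2) η = α^2/2 := by
      rw [integral_indicator_const _ measurableSet_Icc, Real.volume_real_Icc]
      norm_num
    linarith [hval ▸ hmono]
  -- outer integral
  have hK : K = ∫ t' in Set.Ioc 0 t, G t' := intervalIntegral.integral_of_le ht.le
  have hGint : IntegrableOn G (Set.Ioc 0 t) volume := by
    rw [← intervalIntegrable_iff_integrableOn_Ioc_of_le ht.le]
    exact hGcont.intervalIntegrable 0 t
  have hre : K.re = ∫ t' in Set.Ioc 0 t, (G t').re := by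
    rw [hK]
    have h := integral_re hGint
    simp only [RCLike.re_to_complex] at h
    exact h.symm
  have hKre : t * (α^2/2) ≤ K.re := by
    rw [hre]
    have hconst : ∫ _ in Set.Ioc (0:ℝ) t, (α^2/2) = t * (α^2/2) := by
      rw [setIntegral_const, Real.volume_real_Ioc]
      simp [ht.le, smul_eq_mul]
    rw [← hconst]
    refine setIntegral_mono_on
      (integrableOn_const measure_Ioc_lt_top.ne) (hGint.re) measurableSet_Ioc ?_
    intro t' ht'
    exact hinner t' ht'
  -- conclusion
  have hα2 : α^2 = Real.log N ^ (-(2:ℝ)) * N ^ (-(2*s)) := by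
    rw [hαdef, mul_pow]
    congr 1
    · rw [inv_pow, ← Real.rpow_natCast (Real.log N) 2,
        ← Real.rpow_neg hlog.le]
      norm_num
    · rw [show -(2*s) = (-s)*((2:ℕ):ℝ) by push_cast; ring, Real.rpow_mul hN0.le,
        Real.rpow_natCast]
  calc t / 2 * |ξ| * Real.log N ^ (-(2:ℝ)) * N ^ (-(2*s))
      = |ξ| * (t * (α^2/2)) := by rw [hα2]; ring
    _ ≤ |ξ| * K.re := mul_le_mul_of_nonneg_left hKre (abs_nonneg ξ)
    _ ≤ |ξ| * ‖K‖ := mul_le_mul_of_nonneg_left (Complex.re_le_norm K) (abs_nonneg ξ)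
    _ = ‖g 2 t ξ‖ := habs.symm


end
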